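/- For every complex number ξ, the series S(ξ) = ∑_{s=1}^∞ (ξ^s/s!) · H_s converges and equals e^ξ · Ein(ξ), where H_s = ∑_{k=1}^s 1/k is the s-th harmonic number. (This is identity (2.32) in the proof of Theorem 2.1.) -/

import Mathlib

open scoped BigOperators

open Finset

lemma alt_sum_aux (m : ℕ) :
    ∑ j ∈ range (m + 1), (-1 : ℂ) ^ j * (Nat.choose (m + 1) (j + 1) : ℂ) = 1 := by
  have h := Int.alternating_sum_range_choose_of_ne (n := m + 1) (by omega)
  have hC : ∑ i ∈ range (m + 2), (-1 : ℂ) ^ i * ((m + 1).choose i : ℂ) = 0 := by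
    have := congrArg (fun z : ℤ => (z : ℂ)) h
    push_cast at this
    simpa using this
  rw [Finset.sum_range_succ'] at hC
  have h2 : ∑ x ∈ range (m + 1), (-1 : ℂ) ^ (x + 1) * (((m + 1).choose (x + 1)) : ℂ)
      = -∑ j ∈ range (m + 1), (-1 : ℂ) ^ j * ((m + 1).choose (j + 1) : ℂ) := by
    rw [← Finset.sum_neg_distrib]
    exact Finset.sum_congr rfl fun j _ => by ring
  rw [h2] at hC
  simp only [pow_zero, Nat.choose_zero_right, Nat.cast_one, one_mul] at hC
  linear_combination -hC

lemma key_binom_harmonic (n : ℕ) :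
    ∑ j ∈ range (n + 1), (-1 : ℂ) ^ j * (Nat.choose (n + 1) (j + 1) : ℂ) / ((j : ℂ) + 1)
      = ∑ j ∈ range (n + 1), (1 : ℂ) / ((j : ℂ) + 1) := by
  induction n with
  | zero => norm_num
  | succ n ih =>
    have pascal : ∀ j, ((n + 2).choose (j + 1) : ℂ)
        = ((n + 1).choose j : ℂ) + ((n + 1).choose (j + 1) : ℂ) := by
      intro j
      rw [Nat.choose_succ_succ (n + 1) j]
      push_cast; ring
    have split : ∑ j ∈ range (n + 2), (-1 : ℂ) ^ j * ((n + 2).choose (j + 1) : ℂ) / ((j : ℂ) + 1)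
        = (∑ j ∈ range (n + 2), (-1 : ℂ) ^ j * ((n + 1).choose j : ℂ) / ((j : ℂ) + 1))
          + ∑ j ∈ range (n + 2), (-1 : ℂ) ^ j * ((n + 1).choose (j + 1) : ℂ) / ((j : ℂ) + 1) := by
      rw [← Finset.sum_add_distrib]
      refine Finset.sum_congr rfl fun j _ => ?_
      rw [pascal j]; ring
    have hB : ∑ j ∈ range (n + 2), (-1 : ℂ) ^ j * ((n + 1).choose (j + 1) : ℂ) / ((j : ℂ) + 1)
        = ∑ j ∈ range (n + 1), (1 : ℂ) / ((j : ℂ) + 1) := by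
      rw [Finset.sum_range_succ, Nat.choose_succ_self]
      simpa using ih
    have hA : ∑ j ∈ range (n + 2), (-1 : ℂ) ^ j * ((n + 1).choose j : ℂ) / ((j : ℂ) + 1)
        = 1 / ((n : ℂ) + 2) := by
      have hterm : ∀ j ∈ range (n + 2), (-1 : ℂ) ^ j * ((n + 1).choose j : ℂ) / ((j : ℂ) + 1)
          = ((-1 : ℂ) ^ j * ((n + 2).choose (j + 1) : ℂ)) / ((n : ℂ) + 2) := by
        intro j _
        have hnat : (n + 2) * (n + 1).choose j = (n + 2).choose (j + 1) * (j + 1) :=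
          Nat.add_one_mul_choose_eq (n + 1) j
        have hc : ((n : ℂ) + 2) * ((n + 1).choose j : ℂ)
            = ((n + 2).choose (j + 1) : ℂ) * ((j : ℂ) + 1) := by
          have := congrArg (fun z : ℕ => (z : ℂ)) hnat
          push_cast at this
          linear_combination this
        have hj : ((j : ℂ) + 1) ≠ 0 := by
          have : ((j + 1 : ℕ) : ℂ) ≠ 0 := Nat.cast_ne_zero.mpr (Nat.succ_ne_zero j)
          push_cast at this; exact this
        have hn2 : ((n : ℂ) + 2) ≠ 0 := by
          have : ((n + 2 : ℕ) : ℂ) ≠ 0 := Nat.cast_ne_zero.mpr (by omega)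
          push_cast at this; exact this
        rw [div_eq_div_iff hj hn2]
        linear_combination ((-1 : ℂ) ^ j) * hc
      rw [Finset.sum_congr rfl hterm, ← Finset.sum_div]
      rw [alt_sum_aux (n + 1)]
    rw [split, hA, hB]
    conv_rhs => rw [Finset.sum_range_succ]
    push_cast
    ring

lemma keyC_aux (n : ℕ) :
    ∑ j ∈ range (n + 1),
        (-1 : ℂ) ^ j / ((Nat.factorial (n - j) : ℂ) * (((j : ℂ) + 1) * (Nat.factorial (j + 1) : ℂ)))
      = (∑ j ∈ range (n + 1), (1 : ℂ) / ((j : ℂ) + 1)) / (Nat.factorial (n + 1) : ℂ) := by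
  rw [← key_binom_harmonic n, Finset.sum_div]
  refine Finset.sum_congr rfl fun j hj => ?_
  have hjn : j ≤ n := Nat.lt_succ_iff.mp (Finset.mem_range.mp hj)
  have hnat : (n + 1).choose (j + 1) * (j + 1).factorial * (n - j).factorial
      = (n + 1).factorial := by
    have := Nat.choose_mul_factorial_mul_factorial (Nat.succ_le_succ hjn)
    simpa [Nat.succ_sub_succ] using this
  have hc : ((n + 1).choose (j + 1) : ℂ) * ((j + 1).factorial : ℂ) * ((n - j).factorial : ℂ)
      = ((n + 1).factorial : ℂ) := by exact_mod_cast congrArg (fun z : ℕ => (z : ℂ)) hnat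
  have h1 : ((n - j).factorial : ℂ) ≠ 0 := Nat.cast_ne_zero.mpr (Nat.factorial_ne_zero _)
  have h2 : ((j + 1).factorial : ℂ) ≠ 0 := Nat.cast_ne_zero.mpr (Nat.factorial_ne_zero _)
  have h3 : ((n + 1).factorial : ℂ) ≠ 0 := Nat.cast_ne_zero.mpr (Nat.factorial_ne_zero _)
  have hj1 : ((j : ℂ) + 1) ≠ 0 := by
    have : ((j + 1 : ℕ) : ℂ) ≠ 0 := Nat.cast_ne_zero.mpr (Nat.succ_ne_zero j)
    push_cast at this; exact this
  field_simp
  linear_combination (-1 : ℂ) * hc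

lemma keyC'_aux (n : ℕ) :
    ∑ k ∈ range (n + 1),
        (-1 : ℂ) ^ (n - k) /
          ((Nat.factorial k : ℂ) *
            ((((n - k : ℕ) : ℂ) + 1) * (Nat.factorial (n - k + 1) : ℂ)))
      = (∑ j ∈ range (n + 1), (1 : ℂ) / ((j : ℂ) + 1)) / (Nat.factorial (n + 1) : ℂ) := by
  rw [← keyC_aux n, ← Finset.sum_range_reflect]
  refine Finset.sum_congr rfl fun j hj => ?_
  have hjn : j ≤ n := Nat.lt_succ_iff.mp (Finset.mem_range.mp hj)
  have h1 : n + 1 - 1 - j = n - j := by omega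
  have h2 : n - (n - j) = j := Nat.sub_sub_self hjn
  simp only [h1, h2]

/-- The entire exponential integral `Ein(z) = ∑_{k=1}^∞ (−1)^{k+1} z^k/(k·k!)`. -/
noncomputable def Ein (z : ℂ) : ℂ :=
  ∑' k : ℕ, (-1) ^ k * z ^ (k + 1) / ((k + 1 : ℂ) * (Nat.factorial (k + 1) : ℂ))

/-- **Identity (2.32)**: for every complex `ξ`, the series `S(ξ) = ∑_{s=1}^∞ (ξ^s/s!) H_s`
(`H_s` the `s`-th harmonic number) converges and equals `e^ξ · Ein(ξ)`. -/
theorem harmonic_exp_series_eq_exp_mul_Ein (ξ : ℂ) :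
    HasSum
      (fun s : ℕ =>
        ξ ^ (s + 1) / (Nat.factorial (s + 1) : ℂ) *
          ∑ k ∈ Finset.range (s + 1), (1 : ℂ) / ((k : ℂ) + 1))
      (Complex.exp ξ * Ein ξ) := by
  have ha : Summable fun n : ℕ => ‖ξ ^ n / (Nat.factorial n : ℂ)‖ :=
    NormedSpace.norm_expSeries_div_summable ξ
  have hashift : Summable fun n : ℕ => ‖ξ ^ (n + 1) / (Nat.factorial (n + 1) : ℂ)‖ :=
    (summable_nat_add_iff 1).2 ha
  have hb : Summable fun k : ℕ =>
      ‖(-1 : ℂ) ^ k * ξ ^ (k + 1) / (((k : ℂ) + 1) * (Nat.factorial (k + 1) : ℂ))‖ := by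
    refine hashift.of_nonneg_of_le (fun n => norm_nonneg _) fun n => ?_
    simp only [norm_div, norm_mul, norm_pow, norm_neg, norm_one, one_pow, one_mul]
    have hrw : ((n : ℂ) + 1) = ((n + 1 : ℕ) : ℂ) := by push_cast; ring
    rw [hrw, Complex.norm_natCast, Complex.norm_natCast]
    have hf : (0 : ℝ) < ((Nat.factorial (n + 1)) : ℝ) := by positivity
    have hone : (1 : ℝ) ≤ ((n + 1 : ℕ) : ℝ) := by
      exact_mod_cast Nat.succ_le_of_lt (Nat.succ_pos n)
    refine div_le_div_of_nonneg_left (by positivity) hf ?_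
    nlinarith [hf, hone]
  have hexp : HasSum (fun n : ℕ => ξ ^ n / (Nat.factorial n : ℂ)) (Complex.exp ξ) := by
    rw [Complex.exp_eq_exp_ℂ]
    exact NormedSpace.expSeries_div_hasSum_exp ξ
  have hEin : HasSum
      (fun k : ℕ => (-1 : ℂ) ^ k * ξ ^ (k + 1) / (((k : ℂ) + 1) * (Nat.factorial (k + 1) : ℂ)))
      (Ein ξ) := hb.of_norm.hasSum
  have hc : Summable fun n : ℕ => ∑ kl ∈ Finset.HasAntidiagonal.antidiagonal n,
      ξ ^ kl.1 / (Nat.factorial kl.1 : ℂ) *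
        ((-1 : ℂ) ^ kl.2 * ξ ^ (kl.2 + 1) /
          (((kl.2 : ℂ) + 1) * (Nat.factorial (kl.2 + 1) : ℂ))) :=
    (summable_norm_sum_mul_antidiagonal_of_summable_norm ha hb).of_norm
  have heq : Complex.exp ξ * Ein ξ = ∑' n : ℕ, ∑ kl ∈ Finset.HasAntidiagonal.antidiagonal n,
      ξ ^ kl.1 / (Nat.factorial kl.1 : ℂ) *
        ((-1 : ℂ) ^ kl.2 * ξ ^ (kl.2 + 1) /
          (((kl.2 : ℂ) + 1) * (Nat.factorial (kl.2 + 1) : ℂ))) := by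
    rw [← hexp.tsum_eq, ← hEin.tsum_eq]
    exact tsum_mul_tsum_eq_tsum_sum_antidiagonal_of_summable_norm ha hb
  have hfin : ∀ n : ℕ, (∑ kl ∈ Finset.HasAntidiagonal.antidiagonal n,
      ξ ^ kl.1 / (Nat.factorial kl.1 : ℂ) *
        ((-1 : ℂ) ^ kl.2 * ξ ^ (kl.2 + 1) /
          (((kl.2 : ℂ) + 1) * (Nat.factorial (kl.2 + 1) : ℂ))))
      = ξ ^ (n + 1) / (Nat.factorial (n + 1) : ℂ) *
          ∑ k ∈ Finset.range (n + 1), (1 : ℂ) / ((k : ℂ) + 1) := by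
    intro n
    rw [Finset.Nat.sum_antidiagonal_eq_sum_range_succ_mk]
    have hterm : ∀ k ∈ range (n + 1),
        ξ ^ k / (Nat.factorial k : ℂ) *
            ((-1 : ℂ) ^ (n - k) * ξ ^ (n - k + 1) /
              ((((n - k : ℕ) : ℂ) + 1) * (Nat.factorial (n - k + 1) : ℂ)))
        = ξ ^ (n + 1) *
            ((-1 : ℂ) ^ (n - k) /
              ((Nat.factorial k : ℂ) *
                ((((n - k : ℕ) : ℂ) + 1) * (Nat.factorial (n - k + 1) : ℂ)))) := by
      intro k hk
      have hkn : k ≤ n := Nat.lt_succ_iff.mp (Finset.mem_range.mp hk)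
      have hξ : ξ ^ (n + 1) = ξ ^ k * ξ ^ (n - k + 1) := by
        rw [← pow_add]; congr 1; omega
      rw [div_mul_div_comm, mul_div_assoc', hξ]
      ring
    rw [Finset.sum_congr rfl hterm, ← Finset.mul_sum, keyC'_aux n]
    ring
  have hsum := hc.hasSum
  rw [← heq] at hsum
  convert hsum using 1
  funext n
  exact (hfin n).symm
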